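/- For every n ≥ 1 and every p with 1 ≤ p < ∞, there exists an equilateral set of n+1 points in ℓ_p^n; hence e(ℓ_p^n) ≥ n+1. -/

import Mathlib

open Finset

/-- The p-norm on `ℝ^n`. -/
noncomputable def pnorm (p : ℝ) {n : ℕ} (x : Fin n → ℝ) : ℝ :=
  (∑ i, |x i| ^ p) ^ (1 / p)

/-- A set `S ⊆ ℝ^n` is equilateral with respect to the p-norm if there is `λ > 0`
with `‖x - y‖_p = λ` for all distinct `x, y ∈ S`. -/
def IsEquilateral (p : ℝ) {n : ℕ} (S : Set (Fin n → ℝ)) : Prop :=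
  ∃ lam > 0, ∀ x ∈ S, ∀ y ∈ S, x ≠ y → pnorm p (x - y) = lam

/-- For every `n ≥ 1` and every `1 ≤ p < ∞`, there is an equilateral set of `n + 1`
points in `ℓ_p^n`; hence `e(ℓ_p^n) ≥ n + 1`. -/
theorem stmt8 (n : ℕ) (hn : 1 ≤ n) (p : ℝ) (hp : 1 ≤ p) :
    ∃ S : Finset (Fin n → ℝ), S.card = n + 1 ∧ IsEquilateral p (S : Set (Fin n → ℝ)) := by
  have hp0 : (0:ℝ) < p := lt_of_lt_of_le one_pos hp
  have hn1 : (1:ℝ) ≤ (n:ℝ) := by exact_mod_cast hn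
  -- the auxiliary function
  set f : ℝ → ℝ := fun t => |1 - t| ^ p + ((n:ℝ) - 1) * |t| ^ p with hfdef
  have habs : Continuous fun t : ℝ => |t| ^ p := by
    rw [continuous_iff_continuousAt]
    intro x
    exact (Real.continuousAt_rpow_const _ _ (Or.inr hp0.le)).comp continuous_abs.continuousAt
  have hcont : Continuous f := by
    exact (habs.comp (continuous_const.sub continuous_id)).add (continuous_const.mul habs)
  have hf0 : f 0 = 1 := by
    simp [hfdef, Real.one_rpow, Real.zero_rpow hp0.ne']
  have hf3 : 2 ≤ f 3 := by
    have h1 : |1 - (3:ℝ)| ^ p = 2 ^ p := by norm_num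
    have h2 : (2:ℝ) = 2 ^ (1:ℝ) := by norm_num
    have h3 : (2:ℝ) ^ (1:ℝ) ≤ 2 ^ p := Real.rpow_le_rpow_of_exponent_le (by norm_num) hp
    have h4 : 0 ≤ ((n:ℝ) - 1) * |(3:ℝ)| ^ p := by
      apply mul_nonneg (by linarith) (Real.rpow_nonneg (abs_nonneg _) _)
    simp only [hfdef]
    rw [h1]
    nlinarith
  -- find t with f t = 2
  obtain ⟨t, _, hft⟩ : ∃ t ∈ Set.Icc (0:ℝ) 3, f t = 2 := by
    have := intermediate_value_Icc (by norm_num : (0:ℝ) ≤ 3) hcont.continuousOn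
    have h2 : (2:ℝ) ∈ Set.Icc (f 0) (f 3) := by rw [hf0]; exact ⟨by norm_num, hf3⟩
    obtain ⟨t, ht, hft⟩ := this h2
    exact ⟨t, ht, hft⟩
  -- the points
  set v : Fin n → (Fin n → ℝ) := fun i j => if j = i then 1 else 0 with hvdef
  set w : Fin n → ℝ := fun _ => t with hwdef
  have hvinj : Function.Injective v := by
    intro i j hij
    have := congrFun hij i
    simp [hvdef] at this
    by_contra hne
    exact hne this
  -- sum computations
  have sum_vv : ∀ i j : Fin n, i ≠ j → ∑ k, |(v i - v j) k| ^ p = 2 := by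
    intro i j hij
    have : ∀ k, |(v i - v j) k| ^ p
        = (if k = i then (1:ℝ) else 0) + (if k = j then (1:ℝ) else 0) := by
      intro k
      by_cases hki : k = i
      · subst hki
        rw [if_pos rfl, if_neg hij]
        simp [hvdef, hij, Real.one_rpow]
      · by_cases hkj : k = j
        · subst hkj
          rw [if_neg hki, if_pos rfl]
          simp [hvdef, hki, Real.one_rpow]
        · rw [if_neg hki, if_neg hkj]
          simp [hvdef, hki, hkj, Real.zero_rpow hp0.ne']
    rw [Finset.sum_congr rfl (fun k _ => this k), Finset.sum_add_distrib]
    simp only [Finset.sum_ite_eq' Finset.univ, if_pos (Finset.mem_univ i),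
      if_pos (Finset.mem_univ j)]
    norm_num
  have sum_vw : ∀ i : Fin n, ∑ k, |(v i - w) k| ^ p = 2 := by
    intro i
    have : ∀ k, |(v i - w) k| ^ p = if k = i then |1 - t| ^ p else |t| ^ p := by
      intro k
      by_cases hki : k = i
      · subst hki; simp [hvdef, hwdef]
      · simp [hvdef, hwdef, hki]
    have hcard : (Finset.univ.erase i).card = n - 1 := by
      rw [Finset.card_erase_of_mem (Finset.mem_univ i), Finset.card_univ, Fintype.card_fin]
    rw [Finset.sum_congr rfl (fun k _ => this k),
      ← Finset.add_sum_erase _ _ (Finset.mem_univ i), if_pos rfl]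
    have h2 : ∑ k ∈ Finset.univ.erase i, (if k = i then |1 - t| ^ p else |t| ^ p)
        = ((n - 1 : ℕ) : ℝ) * |t| ^ p := by
      rw [Finset.sum_congr rfl (fun k hk => if_neg (Finset.ne_of_mem_erase hk)),
        Finset.sum_const, hcard, nsmul_eq_mul]
    have hc : ((n - 1 : ℕ) : ℝ) = (n:ℝ) - 1 := by
      rw [Nat.cast_sub hn]; norm_num
    rw [h2, hc, ← hft]
  have hlam_pos : (0:ℝ) < (2:ℝ) ^ (1/p) := Real.rpow_pos_of_pos (by norm_num) _
  have hwv : ∀ i : Fin n, w ≠ v i := by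
    intro i hwi
    have := sum_vw i
    rw [hwi] at this
    simp [Real.zero_rpow hp0.ne'] at this
  -- the finset
  refine ⟨insert w (Finset.univ.image v), ?_, ?_⟩
  · rw [Finset.card_insert_of_notMem, Finset.card_image_of_injective _ hvinj,
      Finset.card_univ, Fintype.card_fin]
    intro hmem
    obtain ⟨i, _, hi⟩ := Finset.mem_image.mp hmem
    exact hwv i hi.symm
  · refine ⟨(2:ℝ) ^ (1/p), hlam_pos, ?_⟩
    intro x hx y hy hxy
    simp only [Finset.coe_insert, Set.mem_insert_iff, Finset.coe_image, Set.mem_image,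
      Finset.mem_coe, Finset.mem_univ, true_and, Set.image_univ, Set.mem_range] at hx hy
    have key : ∀ z : Fin n → ℝ, (∑ k, |z k| ^ p) = 2 → pnorm p z = 2 ^ (1/p) := by
      intro z hz
      rw [pnorm, hz]
    rcases hx with hx | ⟨i, rfl⟩
    · rcases hy with hy | ⟨j, rfl⟩
      · exact absurd (hx.trans hy.symm) hxy
      · subst hx
        apply key
        rw [← sum_vw j]
        congr 1; funext k
        rw [Pi.sub_apply, Pi.sub_apply, abs_sub_comm]
    · rcases hy with hy | ⟨j, rfl⟩
      · subst hy
        exact key _ (sum_vw i)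
      · have hij : i ≠ j := fun h => hxy (by rw [h])
        exact key _ (sum_vv i j hij)
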